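/- For every n ≥ 1, in M_n ⊗ ℓ_n^∞ with standard matrix units e_{ij} (and e_{jj} the standard idempotents of ℓ_n^∞), the element u = Σ_{j=1}^n e_{1j} ⊗ e_{jj} has Haagerup norm ‖u‖_h = n^{1/2}, while v = Σ_{j=1}^n e_{j1} ⊗ e_{jj} has Haagerup norm ‖v‖_h = 1. -/

import Mathlib

open scoped Matrix.Norms.L2Operator TensorProduct

section Aux

open scoped ComplexInnerProductSpace

/-- Cauchy–Schwarz for finite sums of nonneg reals. -/
private lemma haagerup_sum_cs {m : ℕ} (p q : Fin m → ℝ) (hp : ∀ k, 0 ≤ p k)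
    (hq : ∀ k, 0 ≤ q k) :
    ∑ k, p k * q k ≤ Real.sqrt (∑ k, (p k)^2) * Real.sqrt (∑ k, (q k)^2) := by
  have h := Finset.sum_mul_sq_le_sq_mul_sq Finset.univ p q
  calc ∑ k, p k * q k = Real.sqrt ((∑ k, p k * q k)^2) := by
        rw [Real.sqrt_sq (Finset.sum_nonneg fun k _ => mul_nonneg (hp k) (hq k))]
    _ ≤ Real.sqrt ((∑ k, (p k)^2) * (∑ k, (q k)^2)) := Real.sqrt_le_sqrt h
    _ = _ := Real.sqrt_mul (Finset.sum_nonneg fun k _ => sq_nonneg _) _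

open ContinuousLinearMap in
/-- The key Haagerup-type estimate for operators on a Hilbert space:
`‖Σ vₖ a wₖ‖ ≤ √‖Σ vₖ vₖ*‖ ‖a‖ √‖Σ wₖ* wₖ‖`. -/
private lemma haagerup_clm_key {H : Type*} [NormedAddCommGroup H] [InnerProductSpace ℂ H]
    [CompleteSpace H] {m : ℕ} (a : H →L[ℂ] H) (v w : Fin m → (H →L[ℂ] H)) :
    ‖∑ k, v k * a * w k‖ ≤
      Real.sqrt ‖∑ k, v k * star (v k)‖ * ‖a‖ * Real.sqrt ‖∑ k, star (w k) * w k‖ := by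
  set V := ∑ k, v k * star (v k) with hV
  set W := ∑ k, star (w k) * w k with hW
  set A := ∑ k, v k * a * w k with hA
  have hC : (0:ℝ) ≤ Real.sqrt ‖V‖ * ‖a‖ * Real.sqrt ‖W‖ := by positivity
  refine ContinuousLinearMap.opNorm_le_bound _ hC (fun x => ?_)
  have hw : ∀ x : H, ∑ k, ‖w k x‖^2 ≤ ‖W‖ * ‖x‖^2 := by
    intro x
    have h1 : ∑ k, ‖w k x‖^2 = RCLike.re (⟪W x, x⟫) := by
      rw [hW, ContinuousLinearMap.sum_apply, sum_inner, map_sum]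
      refine Finset.sum_congr rfl fun k _ => ?_
      rw [show ((star (w k) * w k) x : H) = (star (w k)) ((w k) x) from rfl,
        star_eq_adjoint, adjoint_inner_left, inner_self_eq_norm_sq]
    rw [h1]
    calc RCLike.re (⟪W x, x⟫) ≤ ‖⟪W x, x⟫‖ := RCLike.re_le_norm _
      _ ≤ ‖W x‖ * ‖x‖ := norm_inner_le_norm _ _
      _ ≤ (‖W‖ * ‖x‖) * ‖x‖ := by
          gcongr; exact W.le_opNorm x
      _ = ‖W‖ * ‖x‖^2 := by ring
  have hv : ∀ y : H, ∑ k, ‖(star (v k)) y‖^2 ≤ ‖V‖ * ‖y‖^2 := by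
    intro y
    have h1 : ∑ k, ‖(star (v k)) y‖^2 = RCLike.re (⟪V y, y⟫) := by
      rw [hV, ContinuousLinearMap.sum_apply, sum_inner, map_sum]
      refine Finset.sum_congr rfl fun k _ => ?_
      rw [show ((v k * star (v k)) y : H) = (v k) ((star (v k)) y) from rfl,
        star_eq_adjoint, ← adjoint_inner_right, inner_self_eq_norm_sq]
    rw [h1]
    calc RCLike.re (⟪V y, y⟫) ≤ ‖⟪V y, y⟫‖ := RCLike.re_le_norm _
      _ ≤ ‖V y‖ * ‖y‖ := norm_inner_le_norm _ _
      _ ≤ (‖V‖ * ‖y‖) * ‖y‖ := by gcongr; exact V.le_opNorm y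
      _ = ‖V‖ * ‖y‖^2 := by ring
  have key : ‖A x‖^2 ≤ (Real.sqrt ‖V‖ * ‖a‖ * Real.sqrt ‖W‖) * (‖x‖ * ‖A x‖) := by
    have h1 : (‖A x‖:ℝ)^2 = RCLike.re (⟪A x, A x⟫) := (inner_self_eq_norm_sq _).symm
    have hAx : (A x : H) = ∑ k, (v k) (a ((w k) x)) := by
      rw [hA, ContinuousLinearMap.sum_apply]
      rfl
    have h2 : ⟪A x, A x⟫ = ∑ k, ⟪a (w k x), (star (v k)) (A x)⟫ := by
      nth_rewrite 1 [hAx]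
      rw [sum_inner]
      refine Finset.sum_congr rfl fun k _ => ?_
      rw [star_eq_adjoint, adjoint_inner_right]
    have h3 : RCLike.re (⟪A x, A x⟫) ≤
        ∑ k, (‖a‖ * ‖w k x‖) * ‖(star (v k)) (A x)‖ := by
      rw [h2, map_sum]
      refine Finset.sum_le_sum fun k _ => ?_
      calc RCLike.re (⟪a (w k x), (star (v k)) (A x)⟫)
          ≤ ‖⟪a (w k x), (star (v k)) (A x)⟫‖ := RCLike.re_le_norm _
        _ ≤ ‖a (w k x)‖ * ‖(star (v k)) (A x)‖ := norm_inner_le_norm _ _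
        _ ≤ (‖a‖ * ‖w k x‖) * ‖(star (v k)) (A x)‖ := by
            gcongr; exact a.le_opNorm _
    have h4 : ∑ k, (‖a‖ * ‖w k x‖) * ‖(star (v k)) (A x)‖
        = ‖a‖ * ∑ k, ‖w k x‖ * ‖(star (v k)) (A x)‖ := by
      rw [Finset.mul_sum]; exact Finset.sum_congr rfl fun k _ => by ring
    have h5 : ∑ k, ‖w k x‖ * ‖(star (v k)) (A x)‖ ≤
        Real.sqrt (∑ k, ‖w k x‖^2) * Real.sqrt (∑ k, ‖(star (v k)) (A x)‖^2) :=
      haagerup_sum_cs _ _ (fun k => norm_nonneg _) (fun k => norm_nonneg _)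
    have h6 : Real.sqrt (∑ k, ‖w k x‖^2) ≤ Real.sqrt ‖W‖ * ‖x‖ := by
      rw [← Real.sqrt_sq (norm_nonneg x), ← Real.sqrt_mul (norm_nonneg W)]
      exact Real.sqrt_le_sqrt (hw x)
    have h7 : Real.sqrt (∑ k, ‖(star (v k)) (A x)‖^2) ≤ Real.sqrt ‖V‖ * ‖A x‖ := by
      rw [← Real.sqrt_sq (norm_nonneg (A x)), ← Real.sqrt_mul (norm_nonneg V)]
      exact Real.sqrt_le_sqrt (hv (A x))
    calc ‖A x‖^2 = RCLike.re (⟪A x, A x⟫) := h1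
      _ ≤ ∑ k, (‖a‖ * ‖w k x‖) * ‖(star (v k)) (A x)‖ := h3
      _ = ‖a‖ * ∑ k, ‖w k x‖ * ‖(star (v k)) (A x)‖ := h4
      _ ≤ ‖a‖ * (Real.sqrt (∑ k, ‖w k x‖^2) * Real.sqrt (∑ k, ‖(star (v k)) (A x)‖^2)) :=
          mul_le_mul_of_nonneg_left h5 (norm_nonneg a)
      _ ≤ ‖a‖ * ((Real.sqrt ‖W‖ * ‖x‖) * (Real.sqrt ‖V‖ * ‖A x‖)) :=
          mul_le_mul_of_nonneg_left
            (mul_le_mul h6 h7 (Real.sqrt_nonneg _)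
              (mul_nonneg (Real.sqrt_nonneg _) (norm_nonneg _))) (norm_nonneg a)
      _ = (Real.sqrt ‖V‖ * ‖a‖ * Real.sqrt ‖W‖) * (‖x‖ * ‖A x‖) := by ring
  rcases (norm_nonneg (A x)).eq_or_lt with h0 | h0
  · rw [← h0]
    positivity
  · have h2 : ‖A x‖ * ‖A x‖ ≤ ((Real.sqrt ‖V‖ * ‖a‖ * Real.sqrt ‖W‖) * ‖x‖) * ‖A x‖ := by
      rw [pow_two] at key; linarith [key]
    exact le_of_mul_le_mul_right h2 h0

/-- The key estimate, transferred to matrices with the L² operator norm. -/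
private lemma haagerup_matrix_key {n m : ℕ} (a : Matrix (Fin n) (Fin n) ℂ)
    (v w : Fin m → Matrix (Fin n) (Fin n) ℂ) :
    ‖∑ k, v k * a * w k‖ ≤
      Real.sqrt ‖∑ k, v k * star (v k)‖ * ‖a‖ * Real.sqrt ‖∑ k, star (w k) * w k‖ := by
  have h := haagerup_clm_key (Matrix.toEuclideanCLM (𝕜 := ℂ) a)
    (fun k => Matrix.toEuclideanCLM (𝕜 := ℂ) (v k)) (fun k => Matrix.toEuclideanCLM (𝕜 := ℂ) (w k))
  simpa only [← map_mul, ← map_star, ← map_sum, ← Matrix.cstar_norm_def] using h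

/-- The "slice" map `M_n ⊗ M_n →ₗ M_n`, `v ⊗ w ↦ v * a * w`. -/
private noncomputable def haagerupPhi {n : ℕ} (a : Matrix (Fin n) (Fin n) ℂ) :
    TensorProduct ℂ (Matrix (Fin n) (Fin n) ℂ) (Matrix (Fin n) (Fin n) ℂ) →ₗ[ℂ]
      Matrix (Fin n) (Fin n) ℂ :=
  TensorProduct.lift (LinearMap.mk₂ ℂ (fun v w => v * a * w)
    (fun v v' w => by rw [add_mul, add_mul])
    (fun c v w => by rw [smul_mul_assoc, smul_mul_assoc])
    (fun v w w' => by rw [mul_add])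
    (fun c v w => by rw [mul_smul_comm]))

private lemma haagerupPhi_sum {n m : ℕ} (a : Matrix (Fin n) (Fin n) ℂ)
    (v w : Fin m → Matrix (Fin n) (Fin n) ℂ) :
    haagerupPhi a (∑ k, v k ⊗ₜ[ℂ] w k) = ∑ k, v k * a * w k := by
  rw [map_sum]
  exact Finset.sum_congr rfl fun k _ => rfl

private lemma haagerup_star_E {n : ℕ} (i j : Fin n) :
    star (Matrix.single i j (1:ℂ)) = Matrix.single j i (1:ℂ) := by
  ext a b
  simp only [Matrix.star_apply, Matrix.single, Matrix.of_apply]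
  split_ifs with h1 h2 h2 <;> simp_all

private lemma haagerup_sum_diag_eq_one {n : ℕ} :
    ∑ j : Fin n, Matrix.single j j (1:ℂ) = 1 := by
  ext a b
  by_cases h : a = b
  · subst h
    simp [Matrix.sum_apply, Matrix.single, Matrix.one_apply]
  · simp only [Matrix.sum_apply, Matrix.single, Matrix.of_apply, Matrix.one_apply,
      if_neg h]
    refine Finset.sum_eq_zero fun x _ => ?_
    rw [if_neg]
    rintro ⟨rfl, rfl⟩
    exact h rfl

end Aux

/-- The Haagerup norm of an element of the algebraic tensor product `M_n ⊗ M_n`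
(each factor carrying the operator (L²) norm):
`‖u‖_h = inf { ‖Σ v_k v_k*‖^ (1/2) ‖Σ w_k* w_k‖^(1/2) : u = Σ_k v_k ⊗ w_k }`. -/
noncomputable def haagerupNorm {n : ℕ}
    (u : TensorProduct ℂ (Matrix (Fin n) (Fin n) ℂ) (Matrix (Fin n) (Fin n) ℂ)) : ℝ :=
  sInf {r : ℝ | ∃ (m : ℕ) (v w : Fin m → Matrix (Fin n) (Fin n) ℂ),
    u = ∑ k, v k ⊗ₜ[ℂ] w k ∧
    r = Real.sqrt ‖∑ k, v k * star (v k)‖ * Real.sqrt ‖∑ k, star (w k) * w k‖}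

/-- In `M_n ⊗ ℓ_n^∞` (with `ℓ_n^∞` embedded diagonally in `M_n`), the element
`u = Σ_j e_{1j} ⊗ e_{jj}` has Haagerup norm `√n`, while `v = Σ_j e_{j1} ⊗ e_{jj}` has
Haagerup norm `1`. -/
theorem haagerupNorm_row_vs_column (n : ℕ) (hn : 1 ≤ n) :
    haagerupNorm (∑ j : Fin n,
        Matrix.single (⟨0, hn⟩ : Fin n) j (1 : ℂ) ⊗ₜ[ℂ]
          Matrix.single j j (1 : ℂ)) = Real.sqrt n ∧
    haagerupNorm (∑ j : Fin n,
        Matrix.single j (⟨0, hn⟩ : Fin n) (1 : ℂ) ⊗ₜ[ℂ]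
          Matrix.single j j (1 : ℂ)) = 1 := by
  haveI : NeZero n := ⟨by omega⟩
  set z : Fin n := ⟨0, hn⟩ with hz
  set E : Fin n → Fin n → Matrix (Fin n) (Fin n) ℂ :=
    fun i j => Matrix.single i j (1:ℂ) with hE
  -- basic norm facts
  have hnorm_one : ‖(1 : Matrix (Fin n) (Fin n) ℂ)‖ = 1 := CStarRing.norm_one
  have hEzz_ne : E z z ≠ 0 := by
    intro h
    have := congrFun (congrFun h z) z
    simp [hE, Matrix.single_apply_same] at this
  have hEzz_norm : ‖E z z‖ = 1 := by
    have h1 : star (E z z) * E z z = E z z := by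
      rw [hE, haagerup_star_E, Matrix.single_mul_single_same, one_mul]
    have h2 : ‖E z z‖ * ‖E z z‖ = ‖E z z‖ := by
      rw [← CStarRing.norm_star_mul_self, h1]
    have h3 : 0 < ‖E z z‖ := norm_pos_iff.mpr hEzz_ne
    have := mul_right_cancel₀ (ne_of_gt h3) (by rw [h2, one_mul] : ‖E z z‖ * ‖E z z‖ = 1 * ‖E z z‖)
    exact this
  -- the row ∑ⱼ e_{zj}
  have hR_mul : (∑ j, E z j) * star (∑ j, E z j) = (n : ℂ) • E z z := by
    rw [star_sum, Finset.sum_mul_sum]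
    have : ∀ j : Fin n, ∑ k, E z j * star (E z k) = E z z := by
      intro j
      rw [Finset.sum_eq_single j]
      · rw [hE, haagerup_star_E, Matrix.single_mul_single_same, one_mul]
      · intro k _ hk
        simp only [hE]
        rw [haagerup_star_E]
        exact Matrix.single_mul_single_of_ne _ _ _ _ (Ne.symm hk) _
      · intro h; exact absurd (Finset.mem_univ j) h
    rw [Finset.sum_congr rfl fun j _ => this j, Finset.sum_const, Finset.card_univ,
      Fintype.card_fin, ← Nat.cast_smul_eq_nsmul ℂ]
  have hsmul_norm : ‖(n : ℂ) • E z z‖ = n := by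
    rw [norm_smul, hEzz_norm, mul_one, Complex.norm_natCast]
  have hR_norm : ‖∑ j, E z j‖ = Real.sqrt n := by
    have h1 : ‖∑ j, E z j‖ * ‖∑ j, E z j‖ = n := by
      rw [← CStarRing.norm_self_mul_star, hR_mul, hsmul_norm]
    rw [← h1, Real.sqrt_mul_self (norm_nonneg _)]
  -- norms of the standard decompositions
  have hVu : ∑ j, E z j * star (E z j) = (n : ℂ) • E z z := by
    have : ∀ j : Fin n, E z j * star (E z j) = E z z := fun j => by
      rw [hE, haagerup_star_E, Matrix.single_mul_single_same, one_mul]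
    rw [Finset.sum_congr rfl fun j _ => this j, Finset.sum_const, Finset.card_univ,
      Fintype.card_fin, ← Nat.cast_smul_eq_nsmul ℂ]
  have hWdiag : ∑ j, star (E j j) * E j j = 1 := by
    have : ∀ j : Fin n, star (E j j) * E j j = E j j := fun j => by
      rw [hE, haagerup_star_E, Matrix.single_mul_single_same, one_mul]
    rw [Finset.sum_congr rfl fun j _ => this j]
    exact haagerup_sum_diag_eq_one
  have hVv : ∑ j, E j z * star (E j z) = 1 := by
    have : ∀ j : Fin n, E j z * star (E j z) = E j j := fun j => by
      rw [hE, haagerup_star_E, Matrix.single_mul_single_same, one_mul]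
    rw [Finset.sum_congr rfl fun j _ => this j]
    exact haagerup_sum_diag_eq_one
  constructor
  · -- ‖u‖_h = √n
    apply le_antisymm
    · -- upper bound: the defining decomposition
      apply csInf_le
      · refine ⟨Real.sqrt n, fun r hr => ?_⟩
        obtain ⟨m, v, w, huvw, hr⟩ := hr
        have happ := congrArg (haagerupPhi (1 : Matrix (Fin n) (Fin n) ℂ)) huvw
        rw [haagerupPhi_sum, haagerupPhi_sum] at happ
        have hlhs : ∑ j, E z j * 1 * E j j = ∑ j, E z j := by
          refine Finset.sum_congr rfl fun j _ => ?_
          rw [mul_one, hE, Matrix.single_mul_single_same, one_mul]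
        rw [hlhs] at happ
        have hkey := haagerup_matrix_key (1 : Matrix (Fin n) (Fin n) ℂ) v w
        rw [← happ, hR_norm, hnorm_one, mul_one] at hkey
        rw [hr]
        exact hkey
      · exact ⟨n, (fun j => E z j), (fun j => E j j), rfl, by
          rw [hVu, hWdiag, hsmul_norm, hnorm_one, Real.sqrt_one, mul_one]⟩
    · -- lower bound
      apply le_csInf
      · exact ⟨Real.sqrt n, n, (fun j => E z j), (fun j => E j j), rfl, by
          rw [hVu, hWdiag, hsmul_norm, hnorm_one, Real.sqrt_one, mul_one]⟩
      · intro r hr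
        obtain ⟨m, v, w, huvw, hr⟩ := hr
        have happ := congrArg (haagerupPhi (1 : Matrix (Fin n) (Fin n) ℂ)) huvw
        rw [haagerupPhi_sum, haagerupPhi_sum] at happ
        have hlhs : ∑ j, E z j * 1 * E j j = ∑ j, E z j := by
          refine Finset.sum_congr rfl fun j _ => ?_
          rw [mul_one, hE, Matrix.single_mul_single_same, one_mul]
        rw [hlhs] at happ
        have hkey := haagerup_matrix_key (1 : Matrix (Fin n) (Fin n) ℂ) v w
        rw [← happ, hR_norm, hnorm_one, mul_one] at hkey
        rw [hr]
        exact hkey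
  · -- ‖v‖_h = 1
    have hcenter : ∀ {m : ℕ} (v w : Fin m → Matrix (Fin n) (Fin n) ℂ),
        (∑ j : Fin n, E j z ⊗ₜ[ℂ] E j j) = ∑ k, v k ⊗ₜ[ℂ] w k →
        (1:ℝ) ≤ Real.sqrt ‖∑ k, v k * star (v k)‖ * Real.sqrt ‖∑ k, star (w k) * w k‖ := by
      intro m v w huvw
      have happ := congrArg (haagerupPhi (E z z)) huvw
      rw [haagerupPhi_sum, haagerupPhi_sum] at happ
      have hlhs : ∑ j, E j z * E z z * E j j = E z z := by
        rw [Finset.sum_eq_single z]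
        · rw [hE, Matrix.single_mul_single_same, one_mul, Matrix.single_mul_single_same, one_mul]
        · intro j _ hj
          simp only [hE]
          rw [Matrix.single_mul_single_same, one_mul]
          exact Matrix.single_mul_single_of_ne _ _ _ _ (Ne.symm hj) _
        · intro h; exact absurd (Finset.mem_univ z) h
      rw [hlhs] at happ
      have hkey := haagerup_matrix_key (E z z) v w
      rw [← happ, hEzz_norm] at hkey
      rw [mul_one] at hkey
      exact hkey
    apply le_antisymm
    · apply csInf_le
      · refine ⟨1, fun r hr => ?_⟩
        obtain ⟨m, v, w, huvw, hr⟩ := hr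
        rw [hr]
        exact hcenter v w huvw
      · exact ⟨n, (fun j => E j z), (fun j => E j j), rfl, by
          rw [hVv, hWdiag, hnorm_one, Real.sqrt_one, mul_one]⟩
    · apply le_csInf
      · exact ⟨1, n, (fun j => E j z), (fun j => E j j), rfl, by
          rw [hVv, hWdiag, hnorm_one, Real.sqrt_one, mul_one]⟩
      · intro r hr
        obtain ⟨m, v, w, huvw, hr⟩ := hr
        rw [hr]
        exact hcenter v w huvw
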